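/- arXiv:2110.11379 — 6 statements merged into one kernel-verified Lean document; each statement's English description precedes it below -/
import Mathlib

section
/- Let G be a group, a ∈ G, and suppose |a|_k ≤ n, i.e. the set X_k(a) of commutators [a,x_1,...,x_k] has at most n elements. Then for every d ∈ X_k(a) the index [G : C_G(d)] is at most n². -/
/-- Left-normed commutator `[a,b] = a⁻¹ b⁻¹ a b`. -/
def cmt {G : Type*} [Group G] (a b : G) : G := a⁻¹ * b⁻¹ * a * b

/-- Iterated left-normed commutator `[a, x₁, ..., x_k]`. -/
def itCmt {G : Type*} [Group G] (a : G) (l : List G) : G := l.foldl cmt a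

/-- `Xset a k` is the set of commutators `[a, x₁, ..., x_k]` with `xᵢ ∈ G`. -/
def Xset {G : Type*} [Group G] (a : G) (k : ℕ) : Set G :=
  {b | ∃ l : List G, l.length = k ∧ itCmt a l = b}

theorem stmt_1 {G : Type*} [Group G] (a : G) (k n : ℕ) (hk : 1 ≤ k)
    (hn : (Xset a k).encard ≤ n) :
    ∀ d ∈ Xset a k, (Subgroup.centralizer {d} : Subgroup G).index ≤ n ^ 2 := by
  intro d hd
  obtain ⟨l, hlen, hval⟩ := hd
  obtain rfl | ⟨l', x, rfl⟩ := l.eq_nil_or_concat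
  · simp at hlen; omega
  set b := itCmt a l' with hb
  have hd' : d = cmt b x := by
    rw [← hval]; simp only [itCmt, List.concat_eq_append, List.foldl_append,
      List.foldl_cons, List.foldl_nil]; rfl
  have hmem : ∀ y : G, cmt b y ∈ Xset a k := fun y =>
    ⟨l' ++ [y], by simpa using hlen, by simp only [itCmt, List.foldl_append,
      List.foldl_cons, List.foldl_nil]; rfl⟩
  have hfin : (Xset a k).Finite := by
    rcases Set.finite_or_infinite (Xset a k) with h | h
    · exact h
    · exact absurd hn (by simp [h.encard_eq])
  haveI := hfin.to_subtype
  set C := Subgroup.centralizer ({d} : Set G) with hC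
  have key : ∀ g : G, g * d * g⁻¹ = (cmt b g⁻¹)⁻¹ * cmt b (x * g⁻¹) := by
    intro g; rw [hd']; simp only [cmt]; group
  let F : G → (Xset a k) × (Xset a k) := fun g =>
    (⟨cmt b g⁻¹, hmem _⟩, ⟨cmt b (x * g⁻¹), hmem _⟩)
  have hinj : Function.Injective (fun c : G ⧸ C => F c.out) := by
    intro c₁ c₂ h
    have h1 : (c₁.out : G) * d * c₁.out⁻¹ = c₂.out * d * c₂.out⁻¹ := by
      rw [key, key]
      have e1 : cmt b c₁.out⁻¹ = cmt b c₂.out⁻¹ := congrArg (fun p => (p.1 : G)) h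
      have e2 : cmt b (x * c₁.out⁻¹) = cmt b (x * c₂.out⁻¹) :=
        congrArg (fun p => (p.2 : G)) h
      rw [e1, e2]
    have hm : c₁.out⁻¹ * c₂.out ∈ C := by
      show _ ∈ Subgroup.centralizer {d}
      rw [Subgroup.mem_centralizer_iff]
      intro e he
      rw [Set.mem_singleton_iff] at he
      rw [he]
      calc d * (c₁.out⁻¹ * c₂.out) = c₁.out⁻¹ * (c₁.out * d * c₁.out⁻¹) * c₂.out := by
            group
        _ = c₁.out⁻¹ * (c₂.out * d * c₂.out⁻¹) * c₂.out := by rw [h1]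
        _ = c₁.out⁻¹ * c₂.out * d := by group
    have : (c₁.out : G ⧸ C) = (c₂.out : G ⧸ C) := (QuotientGroup.eq).2 hm
    rwa [QuotientGroup.out_eq', QuotientGroup.out_eq'] at this
  have hcard : Nat.card (G ⧸ C) ≤ Nat.card ((Xset a k) × (Xset a k)) :=
    Nat.card_le_card_of_injective _ hinj
  have hX : Nat.card (Xset a k) ≤ n := by
    rw [Nat.card_coe_set_eq]
    obtain ⟨-, n₀, he, hle⟩ := Set.encard_le_coe_iff.mp hn
    have : (Xset a k).ncard = n₀ := by simp [Set.ncard_def, he]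
    omega
  calc C.index = Nat.card (G ⧸ C) := rfl
    _ ≤ Nat.card ((Xset a k) × (Xset a k)) := hcard
    _ = Nat.card (Xset a k) * Nat.card (Xset a k) := Nat.card_prod _ _
    _ ≤ n * n := Nat.mul_le_mul hX hX
    _ = n ^ 2 := (sq n).symm
end

section
/- Let A be a finite group acting on a finite group G with gcd(|A|,|G|) = 1. Then [[G,A],A] = [G,A], where [G,A] denotes the subgroup of G generated by elements g⁻¹·(g·a) for g ∈ G, a ∈ A (in the semidirect product). -/
/-- For a group `A` acting on a group `G` by automorphisms and a subgroup `H ≤ G`,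
`actComm A H` is the subgroup `[H, A]` of `G` generated by all `h⁻¹ * (a • h)`. -/
def actComm (A : Type*) {G : Type*} [Group A] [Group G] [MulDistribMulAction A G]
    (H : Subgroup G) : Subgroup G :=
  Subgroup.closure {x : G | ∃ h ∈ H, ∃ a : A, x = h⁻¹ * a • h}

section Aux

variable {A G : Type*} [Group A] [Group G] [MulDistribMulAction A G]

lemma gen_mem_actComm {H : Subgroup G} {h : G} (hh : h ∈ H) (a : A) :
    h⁻¹ * a • h ∈ actComm A H :=
  Subgroup.subset_closure ⟨h, hh, a, rfl⟩

/-- K = [G,A] is A-invariant. -/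
lemma smul_mem_K (a : A) {x : G} (hx : x ∈ actComm A (⊤ : Subgroup G)) :
    a • x ∈ actComm A (⊤ : Subgroup G) := by
  induction hx using Subgroup.closure_induction with
  | mem y hy =>
      obtain ⟨h, -, b, rfl⟩ := hy
      have : a • (h⁻¹ * b • h) = (a • h)⁻¹ * (a * b * a⁻¹) • (a • h) := by
        rw [smul_mul', smul_inv']
        congr 1
        rw [mul_smul, mul_smul, inv_smul_smul]
      rw [this]
      exact gen_mem_actComm (Subgroup.mem_top _) _
  | one => simpa using Subgroup.one_mem _
  | mul x y _ _ hx hy => rw [smul_mul']; exact Subgroup.mul_mem _ hx hy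
  | inv x _ hx => rw [smul_inv']; exact Subgroup.inv_mem _ hx

/-- N = [K,A] ≤ K. -/
lemma N_le_K : actComm A (actComm A (⊤ : Subgroup G)) ≤ actComm A (⊤ : Subgroup G) := by
  rw [actComm, Subgroup.closure_le]
  rintro x ⟨h, hh, a, rfl⟩
  exact Subgroup.mul_mem _ (Subgroup.inv_mem _ hh) (smul_mem_K a hh)

/-- N is normalized by K. -/
lemma K_normalizes_N {k x : G} (hk : k ∈ actComm A (⊤ : Subgroup G))
    (hx : x ∈ actComm A (actComm A (⊤ : Subgroup G))) :
    k⁻¹ * x * k ∈ actComm A (actComm A (⊤ : Subgroup G)) := by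
  induction hx using Subgroup.closure_induction with
  | mem y hy =>
      obtain ⟨m, hm, a, rfl⟩ := hy
      have key : k⁻¹ * (m⁻¹ * a • m) * k
          = ((m * k)⁻¹ * a • (m * k)) * (k⁻¹ * a • k)⁻¹ := by
        rw [smul_mul']
        group
      rw [key]
      exact Subgroup.mul_mem _
        (gen_mem_actComm (Subgroup.mul_mem _ hm hk) a)
        (Subgroup.inv_mem _ (gen_mem_actComm hk a))
  | one => simpa using Subgroup.one_mem _
  | mul x y _ _ hx hy =>
      have : k⁻¹ * (x * y) * k = (k⁻¹ * x * k) * (k⁻¹ * y * k) := by group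
      rw [this]; exact Subgroup.mul_mem _ hx hy
  | inv x _ hx =>
      have : k⁻¹ * x⁻¹ * k = (k⁻¹ * x * k)⁻¹ := by group
      rw [this]; exact Subgroup.inv_mem _ hx

end Aux

theorem stmt_3 (A G : Type*) [Group A] [Group G] [MulDistribMulAction A G]
    [Finite A] [Finite G] (hcop : Nat.Coprime (Nat.card A) (Nat.card G)) :
    actComm A (actComm A (⊤ : Subgroup G)) = actComm A (⊤ : Subgroup G) := by
  set K := actComm A (⊤ : Subgroup G) with hK
  set N := actComm A K with hN
  refine le_antisymm N_le_K ?_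
  -- show K ≤ N
  rw [hK, actComm, Subgroup.closure_le]
  rintro x ⟨g, -, a, rfl⟩
  -- work in K ⧸ N'
  set N' : Subgroup K := N.subgroupOf K with hN'
  have hNle : N ≤ K := N_le_K
  have hnorm : N'.Normal := by
    constructor
    intro n hn k
    simp only [hN', Subgroup.mem_subgroupOf] at hn ⊢
    have := K_normalizes_N (A := A) (Subgroup.inv_mem _ k.2) hn
    simpa using this
  -- the cocycle as a map to the quotient
  have cmem : ∀ b : A, g⁻¹ * b • g ∈ K := fun b => gen_mem_actComm (Subgroup.mem_top g) b
  let c : A → K ⧸ N' := fun b => QuotientGroup.mk ⟨g⁻¹ * b • g, cmem b⟩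
  have hmul : ∀ b₁ b₂ : A, c (b₁ * b₂) = c b₁ * c b₂ := by
    intro b₁ b₂
    show QuotientGroup.mk _ = QuotientGroup.mk (⟨_, _⟩ * ⟨_, _⟩ : K)
    rw [QuotientGroup.eq]
    simp only [hN', Subgroup.mem_subgroupOf]
    have key : ((⟨g⁻¹ * (b₁ * b₂) • g, cmem _⟩ : K)⁻¹
        * (⟨g⁻¹ * b₁ • g, cmem b₁⟩ * ⟨g⁻¹ * b₂ • g, cmem b₂⟩ : K) : K)
        = (⟨(g⁻¹ * b₂ • g)⁻¹ * (b₁ • (g⁻¹ * b₂ • g)),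
            Subgroup.mul_mem _ (Subgroup.inv_mem _ (cmem b₂)) (smul_mem_K b₁ (cmem b₂))⟩ : K)⁻¹ := by
      ext
      push_cast
      rw [smul_mul', smul_inv', mul_smul]
      group
    rw [key]
    exact Subgroup.inv_mem _ (gen_mem_actComm (cmem b₂) b₁)
  have hone : c 1 = 1 := by
    have h1 : (⟨g⁻¹ * (1 : A) • g, cmem 1⟩ : K) = 1 := by
      ext; simp
    show QuotientGroup.mk _ = 1
    rw [h1, QuotientGroup.mk_one]
  let φ : A →* K ⧸ N' := { toFun := c, map_one' := hone, map_mul' := hmul }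
  have h1 : (φ a) ^ Nat.card A = 1 := by
    rw [← map_pow, pow_card_eq_one', map_one]
  have h2 : (φ a) ^ Nat.card (K ⧸ N') = 1 := pow_card_eq_one'
  have hdvd1 : orderOf (φ a) ∣ Nat.card A := orderOf_dvd_of_pow_eq_one h1
  have hdvd2 : orderOf (φ a) ∣ Nat.card G := by
    refine (orderOf_dvd_of_pow_eq_one h2).trans ?_
    calc Nat.card (K ⧸ N') ∣ Nat.card K := Subgroup.card_quotient_dvd_card N'
      _ ∣ Nat.card G := Subgroup.card_subgroup_dvd_card K
  have : orderOf (φ a) = 1 := Nat.eq_one_of_dvd_coprimes hcop hdvd1 hdvd2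
  have hφ : φ a = 1 := orderOf_eq_one_iff.mp this
  have : (⟨g⁻¹ * a • g, cmem a⟩ : K) ∈ N' := by
    rw [← QuotientGroup.eq_one_iff]
    exact hφ
  simpa only [hN', Subgroup.mem_subgroupOf, SetLike.mem_coe] using this
end

section
/- Let G be a metabelian group and let a, b ∈ G be left l-Engel elements. Then every element x of the subgroup generated by a and b is a left (2l+1)-Engel element. -/
section Aux
variable {G : Type*} [Group G]
open scoped commutatorElement

lemma cmt_mem_commutator (c g : G) : cmt c g ∈ commutator G := by
  have h : cmt c g = ⁅c⁻¹, g⁻¹⁆ := by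
    simp [cmt, commutatorElement_def]
  rw [h]
  exact Subgroup.commutator_mem_commutator (Subgroup.mem_top _) (Subgroup.mem_top _)

lemma conj_mem_commutator {c : G} (hc : c ∈ commutator G) (g : G) :
    g⁻¹ * c * g ∈ commutator G := by
  have := Subgroup.commutator_normal (⊤ : Subgroup G) ⊤
  have h := this.conj_mem c hc g⁻¹
  simpa [commutator_def] using h

lemma commutatorElt_mem (g h : G) : g * h * g⁻¹ * h⁻¹ ∈ commutator G := by
  have : g * h * g⁻¹ * h⁻¹ = ⁅g, h⁆ := (commutatorElement_def g h).symm
  rw [this]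
  exact Subgroup.commutator_mem_commutator (Subgroup.mem_top _) (Subgroup.mem_top _)

variable (hmeta : ∀ x ∈ commutator G, ∀ y ∈ commutator G, x * y = y * x)
include hmeta

lemma conjswap {c : G} (hc : c ∈ commutator G) (g h : G) :
    h⁻¹ * (g⁻¹ * c * g) * h = g⁻¹ * (h⁻¹ * c * h) * g := by
  have hcw := hmeta c hc _ (commutatorElt_mem g h)
  apply mul_left_cancel (a := g * h)
  calc (g * h) * (h⁻¹ * (g⁻¹ * c * g) * h) = c * (g * h * g⁻¹ * h⁻¹) * (h * g) := by group
    _ = (g * h * g⁻¹ * h⁻¹) * c * (h * g) := by rw [← hcw]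
    _ = (g * h) * (g⁻¹ * (h⁻¹ * c * h) * g) := by group

lemma cmt_eq_conj {c : G} (hc : c ∈ commutator G) (g : G) :
    cmt c g = (g⁻¹ * c * g) * c⁻¹ := by
  have h := hmeta c hc _ (conj_mem_commutator hc g)
  -- c * (g⁻¹ c g) = (g⁻¹ c g) * c
  apply mul_left_cancel (a := c)
  calc c * cmt c g = g⁻¹ * c * g := by simp [cmt]; group
    _ = (c * (g⁻¹ * c * g)) * c⁻¹ := by rw [h]; group
    _ = c * ((g⁻¹ * c * g) * c⁻¹) := by group

lemma cmt_mul {c d : G} (hc : c ∈ commutator G) (hd : d ∈ commutator G) (g : G) :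
    cmt (c * d) g = cmt c g * cmt d g := by
  have h := hmeta _ (cmt_mem_commutator c g) d hd
  -- cmt c g * d = d * cmt c g
  apply mul_left_cancel (a := d)
  calc d * cmt (c * d) g = cmt c g * d * (d⁻¹ * g⁻¹ * d * g) := by simp [cmt]; group
    _ = d * cmt c g * (d⁻¹ * g⁻¹ * d * g) := by rw [h]
    _ = d * (cmt c g * cmt d g) := by simp [cmt]; group

omit hmeta in
lemma itCmt_cons (c g : G) (L : List G) : itCmt c (g :: L) = itCmt (cmt c g) L := rfl

omit hmeta in
lemma cmt_one_left (g : G) : cmt 1 g = 1 := by simp [cmt]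

end Aux

theorem stmt_4 {G : Type*} [Group G]
    (hmeta : ∀ x ∈ commutator G, ∀ y ∈ commutator G, x * y = y * x)
    (l : ℕ) (a b : G)
    (ha : ∀ x : G, itCmt x (List.replicate l a) = 1)
    (hb : ∀ x : G, itCmt x (List.replicate l b) = 1) :
    ∀ x ∈ Subgroup.closure ({a, b} : Set G), ∀ y : G,
      itCmt y (List.replicate (2 * l + 1) x) = 1 := by
  letI : CommGroup ↥(commutator G) :=
    { (inferInstance : Group ↥(commutator G)) with
      mul_comm := fun x y => Subtype.ext (hmeta x.1 x.2 y.1 y.2) }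
  let conj' : G → (↥(commutator G) →* ↥(commutator G)) := fun g =>
    { toFun := fun c => ⟨g⁻¹ * c.1 * g, conj_mem_commutator c.2 g⟩
      map_one' := Subtype.ext (by simp)
      map_mul' := fun c d => Subtype.ext (by
        show g⁻¹ * (c.1 * d.1) * g = (g⁻¹ * c.1 * g) * (g⁻¹ * d.1 * g)
        group) }
  obtain ⟨kap, kap_apply⟩ : ∃ kap : G → AddMonoid.End (Additive ↥(commutator G)),
      ∀ (g : G) (c : Additive ↥(commutator G)),
        (Additive.toMul (kap g c)).1 = g⁻¹ * (Additive.toMul c).1 * g :=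
    ⟨fun g => MonoidHom.toAdditive (conj' g), fun g c => rfl⟩
  have end_mul_apply : ∀ (f f' : AddMonoid.End (Additive ↥(commutator G)))
      (c : Additive ↥(commutator G)), (f * f') c = f (f' c) := fun _ _ _ => rfl
  have ext1 : ∀ f f' : AddMonoid.End (Additive ↥(commutator G)),
      (∀ c : Additive ↥(commutator G),
        (Additive.toMul (f c)).1 = (Additive.toMul (f' c)).1) → f = f' := by
    intro f f' h
    refine AddMonoidHom.ext fun c => ?_
    exact Additive.toMul.injective (Subtype.ext (h c))
  have kap_mul : ∀ g h : G, kap (g * h) = kap h * kap g := by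
    intro g h
    apply ext1
    intro c
    rw [end_mul_apply, kap_apply, kap_apply, kap_apply]
    group
  have kap_one : kap 1 = 1 := by
    apply ext1
    intro c
    rw [kap_apply]
    simp
  have kap_comm : ∀ g h : G, kap g * kap h = kap h * kap g := by
    intro g h
    apply ext1
    intro c
    rw [end_mul_apply, end_mul_apply, kap_apply, kap_apply, kap_apply, kap_apply]
    exact (conjswap hmeta (Additive.toMul c).2 g h).symm
  set R0 : Subring (AddMonoid.End (Additive ↥(commutator G))) :=
    Subring.closure (Set.range kap) with hR0
  have step1 : R0 ≤ Subring.centralizer (Set.range kap) := by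
    rw [hR0, Subring.closure_le]
    rintro f ⟨g, rfl⟩
    rw [SetLike.mem_coe, Subring.mem_centralizer_iff]
    rintro z ⟨h, rfl⟩
    exact kap_comm h g
  have hR0comm : ∀ f ∈ R0, ∀ f' ∈ R0, f * f' = f' * f := by
    have step2 : R0 ≤ Subring.centralizer (R0 : Set _) := by
      rw [hR0, Subring.closure_le]
      rintro z ⟨g, rfl⟩
      rw [SetLike.mem_coe, Subring.mem_centralizer_iff]
      intro w hw
      exact (Subring.mem_centralizer_iff.mp (step1 hw) _ ⟨g, rfl⟩).symm
    intro f hf f' hf'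
    exact Subring.mem_centralizer_iff.mp (step2 hf') f hf
  obtain ⟨d, hd⟩ : ∃ d : G → AddMonoid.End (Additive ↥(commutator G)),
      ∀ g : G, d g = kap g - 1 := ⟨fun g => kap g - 1, fun _ => rfl⟩
  have dmem : ∀ g : G, d g ∈ R0 := by
    intro g
    rw [hd]
    exact sub_mem (Subring.subset_closure ⟨g, rfl⟩) (one_mem _)
  have d_apply : ∀ (g : G) (c : Additive ↥(commutator G)),
      (Additive.toMul (d g c)).1 = cmt (Additive.toMul c).1 g := by
    intro g c
    have h1 : d g c = kap g c - c := by rw [hd]; exact AddMonoidHom.sub_apply _ _ _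
    rw [h1, toMul_sub, cmt_eq_conj hmeta (Additive.toMul c).2 g]
    push_cast
    rw [div_eq_mul_inv, kap_apply]
  have d_pow : ∀ (g : G) (n : ℕ) (c : Additive ↥(commutator G)),
      (Additive.toMul ((d g ^ n) c)).1
        = itCmt (Additive.toMul c).1 (List.replicate n g) := by
    intro g n
    induction n with
    | zero => intro c; simp [itCmt]
    | succ n ih =>
      intro c
      rw [pow_succ, end_mul_apply, ih (d g c), d_apply, List.replicate_succ, itCmt_cons]
  have hdl : ∀ g : G, (∀ x : G, itCmt x (List.replicate l g) = 1) → d g ^ l = 0 := by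
    intro g hg
    refine AddMonoidHom.ext fun c => ?_
    have h := d_pow g l c
    rw [hg] at h
    refine Additive.toMul.injective (Subtype.ext ?_)
    exact h
  have hda := hdl a ha
  have hdb := hdl b hb
  have dmul : ∀ x y : G, d (x * y) = d x + d y + d y * d x := by
    intro x y
    simp only [hd, kap_mul]
    simp only [mul_sub, sub_mul, mul_one, one_mul]
    abel
  have hdec : ∀ x ∈ Subgroup.closure ({a, b} : Set G),
      ∃ s ∈ R0, ∃ t ∈ R0, d x = d a * s + d b * t := by
    intro x hx
    induction hx using Subgroup.closure_induction with
    | mem x hx =>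
      simp only [Set.mem_insert_iff, Set.mem_singleton_iff] at hx
      rcases hx with rfl | rfl
      · exact ⟨1, one_mem _, 0, zero_mem _, by noncomm_ring⟩
      · exact ⟨0, zero_mem _, 1, one_mem _, by noncomm_ring⟩
    | one =>
      refine ⟨0, zero_mem _, 0, zero_mem _, ?_⟩
      rw [hd, kap_one]
      noncomm_ring
    | mul x y hx hy ihx ihy =>
      obtain ⟨s, hs, t, ht, hxe⟩ := ihx
      obtain ⟨s', hs', t', ht', hye⟩ := ihy
      refine ⟨s + s' + s' * d x, add_mem (add_mem hs hs') (mul_mem hs' (dmem x)),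
        t + t' + t' * d x, add_mem (add_mem ht ht') (mul_mem ht' (dmem x)), ?_⟩
      rw [dmul x y, hxe, hye]
      noncomm_ring
    | inv x hx ihx =>
      obtain ⟨s, hs, t, ht, hxe⟩ := ihx
      have h0 : d x + d x⁻¹ + d x⁻¹ * d x = 0 := by
        rw [← dmul x x⁻¹, mul_inv_cancel, hd, kap_one]
        noncomm_ring
      have hxi : d x⁻¹ = -(d x) - d x⁻¹ * d x := by
        have h0' : d x⁻¹ + (d x + d x⁻¹ * d x) = 0 := by rw [← h0]; abel
        refine (eq_neg_of_add_eq_zero_left h0').trans ?_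
        abel
      have hca : d x⁻¹ * (d a * s) = d a * (d x⁻¹ * s) := by
        rw [← mul_assoc, hR0comm _ (dmem x⁻¹) _ (dmem a), mul_assoc]
      have hcb : d x⁻¹ * (d b * t) = d b * (d x⁻¹ * t) := by
        rw [← mul_assoc, hR0comm _ (dmem x⁻¹) _ (dmem b), mul_assoc]
      refine ⟨-s - d x⁻¹ * s, sub_mem (neg_mem hs) (mul_mem (dmem x⁻¹) hs),
        -t - d x⁻¹ * t, sub_mem (neg_mem ht) (mul_mem (dmem x⁻¹) ht), ?_⟩
      calc d x⁻¹ = -(d x) - d x⁻¹ * d x := hxi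
        _ = -(d a * s + d b * t) - d x⁻¹ * (d a * s + d b * t) := by rw [hxe]
        _ = -(d a * s + d b * t) - (d x⁻¹ * (d a * s) + d x⁻¹ * (d b * t)) := by
            rw [mul_add]
        _ = -(d a * s + d b * t) - (d a * (d x⁻¹ * s) + d b * (d x⁻¹ * t)) := by
            rw [hca, hcb]
        _ = d a * (-s - d x⁻¹ * s) + d b * (-t - d x⁻¹ * t) := by
            have e : ∀ u v : AddMonoid.End (Additive ↥(commutator G)), u * (-v) = -(u * v) :=
              fun u v => AddMonoidHom.ext fun c => map_neg u (v c)
            simp only [mul_sub, e]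
            abel
  have hkill : ∀ s ∈ R0, ∀ t ∈ R0, (d a * s + d b * t) ^ (2 * l) = 0 := by
    intro s hs t ht
    have hA : d a * s ∈ R0 := mul_mem (dmem a) hs
    have hB : d b * t ∈ R0 := mul_mem (dmem b) ht
    have hAB : Commute (d a * s) (d b * t) := hR0comm _ hA _ hB
    rw [hAB.add_pow]
    apply Finset.sum_eq_zero
    intro i hi
    rcases le_or_gt l i with h | h
    · have hc : Commute (d a) s := hR0comm _ (dmem a) _ hs
      rw [hc.mul_pow]
      have hz : d a ^ i = 0 := by
        rw [show i = l + (i - l) by omega, pow_add, hda, zero_mul]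
      rw [hz, zero_mul, zero_mul, zero_mul]
    · have hc : Commute (d b) t := hR0comm _ (dmem b) _ ht
      rw [hc.mul_pow]
      have hz : d b ^ (2 * l - i) = 0 := by
        rw [show 2 * l - i = l + (2 * l - i - l) by omega, pow_add, hdb, zero_mul]
      rw [hz, zero_mul, mul_zero, zero_mul]
  intro x hx y
  obtain ⟨s, hs, t, ht, hxe⟩ := hdec x hx
  have hzero : d x ^ (2 * l) = 0 := by rw [hxe]; exact hkill s hs t ht
  have hcm : cmt y x ∈ commutator G := cmt_mem_commutator y x
  have hfin := d_pow x (2 * l) (Additive.ofMul ⟨cmt y x, hcm⟩)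
  rw [hzero] at hfin
  simp only [AddMonoidHom.zero_apply, toMul_zero, OneMemClass.coe_one, toMul_ofMul] at hfin
  calc itCmt y (List.replicate (2 * l + 1) x)
      = itCmt (cmt y x) (List.replicate (2 * l) x) := by
        rw [List.replicate_succ, itCmt_cons]
    _ = 1 := hfin.symm
end

section
/- Let G be a metabelian group and let a ∈ G be a left l-Engel element. Then the subgroup G'⟨a⟩ generated by the derived subgroup and a is a normal subgroup of G which is nilpotent of class at most l. -/
open scoped commutatorElement

namespace StmtAux

variable {G : Type*} [Group G]

lemma cmt_one_right (x : G) : cmt x 1 = 1 := by simp [cmt]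

lemma cmt_one_left (h : G) : cmt 1 h = 1 := by simp [cmt]

lemma cmt_eq_commutatorElement (x y : G) : cmt x y = ⁅x⁻¹, y⁻¹⁆ := by
  simp only [cmt, commutatorElement_def, inv_inv]

lemma cmt_mem_commutator (x y : G) : cmt x y ∈ commutator G := by
  rw [cmt_eq_commutatorElement]
  exact Subgroup.commutator_mem_commutator (Subgroup.mem_top _) (Subgroup.mem_top _)

lemma cmt_mul_right (x h₁ h₂ : G) :
    cmt x (h₁ * h₂) = cmt x h₂ * (h₂⁻¹ * cmt x h₁ * h₂) := by
  simp only [cmt]; group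

lemma cmt_inv_right (x h : G) : cmt x h⁻¹ = h * (cmt x h)⁻¹ * h⁻¹ := by
  simp only [cmt]; group

lemma cmt_mul_left (x₁ x₂ h : G) :
    cmt (x₁ * x₂) h = (x₂⁻¹ * cmt x₁ h * x₂) * cmt x₂ h := by
  simp only [cmt]; group

lemma cmt_inv_left (x h : G) : cmt x⁻¹ h = x * (cmt x h)⁻¹ * x⁻¹ := by
  simp only [cmt]; group

lemma cmt_swap (x h : G) : cmt x h = (cmt h x)⁻¹ := by
  simp only [cmt]; group

lemma cmt_eq_one_of_comm {x y : G} (h : x * y = y * x) : cmt x y = 1 := by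
  simp only [cmt]
  rw [mul_assoc, mul_assoc, h]
  group

lemma conj_cmt (g x y : G) :
    g * cmt x y * g⁻¹ = cmt (g * x * g⁻¹) (g * y * g⁻¹) := by
  simp only [cmt]; group

/-- The Engel map `x ↦ [x, a]`. -/
def fE (a : G) : G → G := fun x => cmt x a

section

variable (hmeta : ∀ x ∈ commutator G, ∀ y ∈ commutator G, x * y = y * x) (a : G)

lemma fE_mem (x : G) : fE a x ∈ commutator G := cmt_mem_commutator x a

lemma fE_iter_mem (k : ℕ) {c : G} (hc : c ∈ commutator G) :
    (fE a)^[k] c ∈ commutator G := by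
  induction k with
  | zero => simpa
  | succ n _ => rw [Function.iterate_succ_apply']; exact fE_mem a _

include hmeta

lemma conj_comm_of_mem {x d : G} (hx : x ∈ commutator G) (hd : d ∈ commutator G) :
    d⁻¹ * x * d = x := by
  rw [mul_assoc, hmeta x hx d hd, ← mul_assoc, inv_mul_cancel, one_mul]

lemma fE_mul (c d : G) (hd : d ∈ commutator G) :
    fE a (c * d) = fE a c * fE a d := by
  show cmt (c * d) a = cmt c a * cmt d a
  rw [cmt_mul_left, conj_comm_of_mem hmeta (cmt_mem_commutator c a) hd]

lemma fE_inv (c : G) (hc : c ∈ commutator G) : fE a c⁻¹ = (fE a c)⁻¹ := by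
  show cmt c⁻¹ a = (cmt c a)⁻¹
  have h := conj_comm_of_mem hmeta (inv_mem (cmt_mem_commutator c a)) (inv_mem hc)
  rw [inv_inv] at h
  rw [cmt_inv_left, h]

lemma conj_fE {c : G} (hc : c ∈ commutator G) (g : G) :
    g * fE a c * g⁻¹ = fE a (g * c * g⁻¹) := by
  have hu : cmt a g⁻¹ ∈ commutator G := cmt_mem_commutator a g⁻¹
  have hcnj : g * c * g⁻¹ ∈ commutator G :=
    (Subgroup.Normal.conj_mem inferInstance c hc g)
  have hb : g * a * g⁻¹ = a * cmt a g⁻¹ := by simp only [cmt]; group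
  show g * cmt c a * g⁻¹ = cmt (g * c * g⁻¹) a
  rw [conj_cmt, hb, cmt_mul_right,
    cmt_eq_one_of_comm (hmeta _ hcnj _ hu), one_mul,
    conj_comm_of_mem hmeta (cmt_mem_commutator _ a) hu]

end

/-- `Bsub a k` is the subgroup generated by `k`-fold Engel commutators of elements
of the derived subgroup. -/
def Bsub (a : G) (k : ℕ) : Subgroup G :=
  Subgroup.closure ((fE a)^[k] '' (commutator G : Set G))

section

variable (hmeta : ∀ x ∈ commutator G, ∀ y ∈ commutator G, x * y = y * x) (a : G)

lemma Bsub_le_commutator (k : ℕ) : Bsub a k ≤ commutator G := by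
  apply (Subgroup.closure_le _).mpr
  rintro x ⟨c, hc, rfl⟩
  exact fE_iter_mem a k hc

lemma mem_Bsub_zero {c : G} (hc : c ∈ commutator G) : c ∈ Bsub a 0 :=
  Subgroup.subset_closure ⟨c, hc, rfl⟩

include hmeta

lemma conj_fE_iter (k : ℕ) {c : G} (hc : c ∈ commutator G) (g : G) :
    g * (fE a)^[k] c * g⁻¹ = (fE a)^[k] (g * c * g⁻¹) := by
  induction k with
  | zero => simp
  | succ n ih =>
    rw [Function.iterate_succ_apply', Function.iterate_succ_apply',
      conj_fE hmeta a (fE_iter_mem a n hc) g, ih]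

lemma Bsub_normal (k : ℕ) : (Bsub a k).Normal := by
  constructor
  intro n hn g
  induction hn using Subgroup.closure_induction with
  | mem x hx =>
    rcases hx with ⟨c, hc, rfl⟩
    rw [conj_fE_iter hmeta a k hc g]
    exact Subgroup.subset_closure
      ⟨g * c * g⁻¹, Subgroup.Normal.conj_mem inferInstance c hc g, rfl⟩
  | one => simpa using one_mem (Bsub a k)
  | mul x y _ _ px py =>
    have h : g * (x * y) * g⁻¹ = (g * x * g⁻¹) * (g * y * g⁻¹) := by group
    rw [h]; exact mul_mem px py
  | inv x _ px =>
    have h : g * x⁻¹ * g⁻¹ = (g * x * g⁻¹)⁻¹ := by group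
    rw [h]; exact inv_mem px

lemma fE_mem_Bsub_succ (k : ℕ) {x : G} (hx : x ∈ Bsub a k) :
    fE a x ∈ Bsub a (k + 1) := by
  have key : x ∈ commutator G ∧ fE a x ∈ Bsub a (k + 1) := by
    induction hx using Subgroup.closure_induction with
    | mem c hc =>
      rcases hc with ⟨d, hd, rfl⟩
      refine ⟨fE_iter_mem a k hd, Subgroup.subset_closure ⟨d, hd, ?_⟩⟩
      rw [Function.iterate_succ_apply']
    | one =>
      refine ⟨one_mem _, ?_⟩
      show cmt 1 a ∈ _
      rw [cmt_one_left]; exact one_mem _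
    | mul x y _ _ px py =>
      refine ⟨mul_mem px.1 py.1, ?_⟩
      rw [fE_mul hmeta a x y py.1]
      exact mul_mem px.2 py.2
    | inv x _ px =>
      refine ⟨inv_mem px.1, ?_⟩
      rw [fE_inv hmeta a x px.1]
      exact inv_mem px.2
  exact key.2

omit hmeta in
lemma sup_eq_closure_union :
    commutator G ⊔ Subgroup.closure {a} =
      Subgroup.closure ((commutator G : Set G) ∪ {a}) := by
  rw [Subgroup.closure_union, Subgroup.closure_eq]

lemma cmt_mem_Bsub_succ (k : ℕ) {x h : G} (hx : x ∈ Bsub a k)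
    (hh : h ∈ commutator G ⊔ Subgroup.closure {a}) :
    cmt x h ∈ Bsub a (k + 1) := by
  have hN := Bsub_normal hmeta a (k + 1)
  rw [sup_eq_closure_union] at hh
  induction hh using Subgroup.closure_induction with
  | mem y hy =>
    rcases hy with hy | hy
    · have hxA : x ∈ commutator G := Bsub_le_commutator a k hx
      rw [cmt_eq_one_of_comm (hmeta x hxA y hy)]
      exact one_mem _
    · rw [show y = a from hy]
      exact fE_mem_Bsub_succ hmeta a k hx
  | one => rw [cmt_one_right]; exact one_mem _
  | mul h₁ h₂ _ _ p₁ p₂ =>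
    rw [cmt_mul_right]
    refine mul_mem p₂ ?_
    simpa using hN.conj_mem _ p₁ h₂⁻¹
  | inv h _ p =>
    rw [cmt_inv_right]
    exact hN.conj_mem _ (inv_mem p) h

lemma fE_mem_Bsub_one {h : G} (hh : h ∈ commutator G ⊔ Subgroup.closure {a}) :
    cmt h a ∈ Bsub a 1 := by
  have hN := Bsub_normal hmeta a 1
  rw [sup_eq_closure_union] at hh
  induction hh using Subgroup.closure_induction with
  | mem y hy =>
    rcases hy with hy | hy
    · exact Subgroup.subset_closure ⟨y, hy, by rw [Function.iterate_one]; rfl⟩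
    · rw [show y = a from hy, cmt_eq_one_of_comm rfl]
      exact one_mem _
  | one => rw [cmt_one_left]; exact one_mem _
  | mul x₁ x₂ _ _ p₁ p₂ =>
    rw [cmt_mul_left]
    refine mul_mem ?_ p₂
    simpa using hN.conj_mem _ p₁ x₂⁻¹
  | inv x _ p =>
    rw [cmt_inv_left]
    exact hN.conj_mem _ (inv_mem p) x

lemma cmt_mem_Bsub_one {x h : G} (hx : x ∈ commutator G ⊔ Subgroup.closure {a})
    (hh : h ∈ commutator G ⊔ Subgroup.closure {a}) :
    cmt x h ∈ Bsub a 1 := by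
  have hN := Bsub_normal hmeta a 1
  rw [sup_eq_closure_union] at hx
  induction hx using Subgroup.closure_induction with
  | mem y hy =>
    rcases hy with hy | hy
    · exact cmt_mem_Bsub_succ hmeta a 0 (mem_Bsub_zero a hy) hh
    · rw [show y = a from hy, cmt_swap]
      exact inv_mem (fE_mem_Bsub_one hmeta a hh)
  | one => rw [cmt_one_left]; exact one_mem _
  | mul x₁ x₂ _ _ p₁ p₂ =>
    rw [cmt_mul_left]
    refine mul_mem ?_ p₂
    simpa using hN.conj_mem _ p₁ x₂⁻¹
  | inv x _ p =>
    rw [cmt_inv_left]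
    exact hN.conj_mem _ (inv_mem p) x

lemma lcs_le (k : ℕ) :
    Subgroup.lowerCentralSeries (⊤ : Subgroup ↥(commutator G ⊔ Subgroup.closure {a})) (k + 1) ≤
      (Bsub a (k + 1)).comap (commutator G ⊔ Subgroup.closure {a}).subtype := by
  have hcoe : ∀ g₁ g₂ : ↥(commutator G ⊔ Subgroup.closure {a}),
      (commutator G ⊔ Subgroup.closure {a}).subtype ⁅g₁, g₂⁆ =
        cmt ((g₁ : G))⁻¹ ((g₂ : G))⁻¹ := by
    intro g₁ g₂
    rw [map_commutatorElement, cmt_eq_commutatorElement, inv_inv, inv_inv]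
    rfl
  induction k with
  | zero =>
    rw [Subgroup.lowerCentralSeries_succ, Subgroup.lowerCentralSeries_zero]
    refine Subgroup.commutator_le.mpr ?_
    intro g₁ _ g₂ _
    rw [Subgroup.mem_comap, hcoe]
    exact cmt_mem_Bsub_one hmeta a (inv_mem g₁.2) (inv_mem g₂.2)
  | succ n ih =>
    rw [Subgroup.lowerCentralSeries_succ]
    refine Subgroup.commutator_le.mpr ?_
    intro g₁ h₁ g₂ _
    rw [Subgroup.mem_comap, hcoe]
    have hb : ((g₁ : G))⁻¹ ∈ Bsub a (n + 1) := inv_mem (ih h₁)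
    exact cmt_mem_Bsub_succ hmeta a (n + 1) hb (inv_mem g₂.2)

end

lemma itCmt_replicate (a : G) (k : ℕ) (x : G) :
    itCmt x (List.replicate k a) = (fE a)^[k] x := by
  induction k generalizing x with
  | zero => simp [itCmt]
  | succ n ih =>
    rw [List.replicate_succ, itCmt, List.foldl_cons, Function.iterate_succ_apply]
    exact ih (cmt x a)

lemma Bsub_eq_bot (a : G) (l : ℕ) (h : ∀ x : G, (fE a)^[l] x = 1) :
    Bsub a l = ⊥ := by
  rw [eq_bot_iff]
  refine (Subgroup.closure_le _).mpr ?_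
  rintro x ⟨c, _, rfl⟩
  simp [h c, Subgroup.mem_bot]

end StmtAux

theorem stmt_5 {G : Type*} [Group G]
    (hmeta : ∀ x ∈ commutator G, ∀ y ∈ commutator G, x * y = y * x)
    (l : ℕ) (a : G)
    (ha : ∀ x : G, itCmt x (List.replicate l a) = 1) :
    (commutator G ⊔ Subgroup.closure {a}).Normal ∧
      Subgroup.lowerCentralSeries (⊤ : Subgroup ↥(commutator G ⊔ Subgroup.closure {a})) l = ⊥ := by
  constructor
  · constructor
    intro n hn g
    rw [StmtAux.sup_eq_closure_union a] at hn ⊢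
    induction hn using Subgroup.closure_induction with
    | mem x hx =>
      rcases hx with hx | hx
      · exact Subgroup.subset_closure
          (Or.inl (Subgroup.Normal.conj_mem inferInstance x hx g))
      · rw [show x = a from hx]
        have h : g * a * g⁻¹ = ⁅g, a⁆ * a := by
          rw [commutatorElement_def]; group
        rw [h]
        refine mul_mem ?_ (Subgroup.subset_closure (Or.inr rfl))
        exact Subgroup.subset_closure
          (Or.inl (Subgroup.commutator_mem_commutator (Subgroup.mem_top _)
            (Subgroup.mem_top _)))
    | one => simpa using one_mem _
    | mul x y _ _ px py =>
      have h : g * (x * y) * g⁻¹ = (g * x * g⁻¹) * (g * y * g⁻¹) := by group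
      rw [h]; exact mul_mem px py
    | inv x _ px =>
      have h : g * x⁻¹ * g⁻¹ = (g * x * g⁻¹)⁻¹ := by group
      rw [h]; exact inv_mem px
  · cases l with
    | zero =>
      have h1 : ∀ x : G, x = 1 := fun x => by simpa [itCmt] using ha x
      rw [Subgroup.lowerCentralSeries_zero, eq_bot_iff]
      intro x _
      rw [Subgroup.mem_bot]
      exact Subtype.ext (h1 _)
    | succ m =>
      have hiter : ∀ x : G, (StmtAux.fE a)^[m + 1] x = 1 := fun x => by
        rw [← StmtAux.itCmt_replicate]; exact ha x
      have hbot : StmtAux.Bsub a (m + 1) = ⊥ := StmtAux.Bsub_eq_bot a (m + 1) hiter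
      rw [eq_bot_iff]
      intro x hx
      have hmem := StmtAux.lcs_le hmeta a m hx
      rw [Subgroup.mem_comap, hbot, Subgroup.mem_bot] at hmem
      rw [Subgroup.mem_bot]
      exact Subtype.ext hmem
end

section
/- Let G be a group, k ≥ 1, and a, b ∈ G with |a|_k ≤ n and |b|_k finite. Then |ab|_k ≤ n³·|b|_k. -/
lemma itCmt_concat {G : Type*} [Group G] (a : G) (l : List G) (y : G) :
    itCmt a (l ++ [y]) = cmt (itCmt a l) y := by
  simp [itCmt, List.foldl_append]

lemma cmt_mem_Xset {G : Type*} [Group G] {a c : G} {k : ℕ}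
    (h : c ∈ Xset a k) (z : G) : cmt c z ∈ Xset a (k + 1) := by
  obtain ⟨l, hl, rfl⟩ := h
  exact ⟨l ++ [z], by simp [hl], (itCmt_concat a l z)⟩

lemma itCmt_one {G : Type*} [Group G] (l : List G) : itCmt (1 : G) l = 1 := by
  induction l with
  | nil => rfl
  | cons x l ih =>
    have : cmt (1 : G) x = 1 := by simp [cmt]
    simpa [itCmt, this] using ih

lemma one_mem_Xset {G : Type*} [Group G] (a : G) {k : ℕ} (hk : 1 ≤ k) :
    (1 : G) ∈ Xset a k := by
  obtain ⟨j, rfl⟩ := Nat.exists_eq_add_of_le hk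
  refine ⟨List.replicate (1 + j) 1, by simp, ?_⟩
  have : cmt a 1 = 1 := by simp [cmt]
  simp [List.replicate_add, itCmt, this]
  simpa [itCmt] using itCmt_one (G := G) (List.replicate j 1)

/-- Key structural identity: `[ab, x₁,…,x_k] = (cᵂ) d` with `c ∈ X_k(a)`, `d ∈ X_k(b)`. -/
lemma key_decomp {G : Type*} [Group G] (a b : G) (l : List G) (hl : l ≠ []) :
    ∃ c ∈ Xset a l.length, ∃ d ∈ Xset b l.length, ∃ w : G,
      itCmt (a * b) l = w⁻¹ * c * w * d := by
  induction l using List.reverseRecOn with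
  | nil => exact absurd rfl hl
  | append_singleton l y ih =>
    rcases eq_or_ne l [] with rfl | hne
    · refine ⟨cmt a y, ⟨[y], rfl, rfl⟩, cmt b y, ⟨[y], rfl, rfl⟩, b, ?_⟩
      simp only [itCmt, List.foldl, List.nil_append]
      unfold cmt; group
    · obtain ⟨c, hc, d, hd, w, hw⟩ := ih hne
      refine ⟨cmt c (w * y * w⁻¹), by simpa using cmt_mem_Xset hc _,
              cmt d y, by simpa using cmt_mem_Xset hd _, w * d, ?_⟩
      rw [itCmt_concat, hw]
      unfold cmt; group

/-- Any conjugate of an element of `X_k(a)` (k ≥ 1) is `v⁻¹ * u` with `u v ∈ X_k(a)`. -/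
lemma conj_decomp {G : Type*} [Group G] {a c : G} {k : ℕ} (hk : 1 ≤ k)
    (hc : c ∈ Xset a k) (w : G) :
    ∃ v ∈ Xset a k, ∃ u ∈ Xset a k, w⁻¹ * c * w = v⁻¹ * u := by
  obtain ⟨l, hl, rfl⟩ := hc
  rcases l.eq_nil_or_concat with rfl | ⟨l', x, rfl⟩
  · simp at hl; omega
  · set u := itCmt a l'
    have hlen : l'.length + 1 = k := by simpa using hl
    refine ⟨cmt u w, hlen ▸ cmt_mem_Xset ⟨l', rfl, rfl⟩ w,
            cmt u (x * w), hlen ▸ cmt_mem_Xset ⟨l', rfl, rfl⟩ (x * w), ?_⟩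
    rw [List.concat_eq_append, itCmt_concat]
    unfold cmt; group
    rfl

lemma encard_prod_finite {α β : Type*} {s : Set α} {t : Set β}
    (hs : s.Finite) (ht : t.Finite) : (s ×ˢ t).encard = s.encard * t.encard := by
  rw [hs.encard_eq_coe_toFinset_card, ht.encard_eq_coe_toFinset_card,
    (hs.prod ht).encard_eq_coe_toFinset_card, ← Set.Finite.toFinset_prod hs ht,
    Finset.card_product]
  push_cast
  rfl

theorem stmt_7 {G : Type*} [Group G] (a b : G) (k n : ℕ) (hk : 1 ≤ k)
    (ha : (Xset a k).encard ≤ n) (hb : (Xset b k).Finite) :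
    (Xset (a * b) k).encard ≤ (n : ℕ∞) ^ 3 * (Xset b k).encard := by
  have haf : (Xset a k).Finite := Set.finite_of_encard_le_coe ha
  -- X_k(ab) is contained in the image of (X_k a) × (X_k a) × (X_k b)
  have hsub : Xset (a * b) k ⊆
      (fun p : G × G × G => p.1⁻¹ * p.2.1 * p.2.2) ''
        (Xset a k ×ˢ (Xset a k ×ˢ Xset b k)) := by
    rintro g ⟨l, hl, rfl⟩
    have hne : l ≠ [] := by
      intro h; rw [h] at hl; simp at hl; omega
    obtain ⟨c, hc, d, hd, w, hw⟩ := key_decomp a b l hne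
    rw [hl] at hc hd
    obtain ⟨v, hv, u, hu, hvu⟩ := conj_decomp hk hc w
    refine ⟨(v, u, d), ⟨hv, hu, hd⟩, ?_⟩
    simp only
    rw [hw, hvu]
  calc (Xset (a * b) k).encard
      ≤ _ := Set.encard_le_encard hsub
    _ ≤ ((Xset a k) ×ˢ ((Xset a k) ×ˢ (Xset b k))).encard := Set.encard_image_le _ _
    _ = (Xset a k).encard * ((Xset a k).encard * (Xset b k).encard) := by
        rw [encard_prod_finite haf (haf.prod hb), encard_prod_finite haf hb]
    _ ≤ (n : ℕ∞) * ((n : ℕ∞) * (Xset b k).encard) := by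
        exact mul_le_mul' ha (mul_le_mul' ha le_rfl)
    _ ≤ (n : ℕ∞) ^ 3 * (Xset b k).encard := by
        have hn1 : (1 : ℕ∞) ≤ n := by
          calc (1 : ℕ∞) = ({(1 : G)} : Set G).encard := (Set.encard_singleton _).symm
            _ ≤ (Xset a k).encard :=
                Set.encard_le_encard (by simpa using one_mem_Xset a hk)
            _ ≤ n := ha
        calc (n : ℕ∞) * ((n : ℕ∞) * (Xset b k).encard)
            = (n : ℕ∞) * (n : ℕ∞) * (Xset b k).encard := by ring
          _ ≤ (n : ℕ∞) * (n : ℕ∞) * (n : ℕ∞) * (Xset b k).encard := by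
              exact mul_le_mul' (le_mul_of_one_le_right' hn1) le_rfl
          _ = (n : ℕ∞) ^ 3 * (Xset b k).encard := by ring
end

section
/- Let G be a group generated by a set S, and let k ≥ 1. Then γ_{k+1}(G), the (k+1)-st term of the lower central series, is generated by the set of all conjugates of elements of X_k(g) for g ∈ S, i.e. γ_{k+1}(G) equals the normal closure in G of ⋃_{g∈S} X_k(g). -/
lemma itCmt_cons_s9 {G : Type*} [Group G] (a y : G) (l : List G) :
    itCmt a (y :: l) = itCmt (cmt a y) l := rfl

lemma map_itCmt {G H : Type*} [Group G] [Group H] (f : G →* H) (a : G) (l : List G) :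
    f (itCmt a l) = itCmt (f a) (l.map f) := by
  induction l generalizing a with
  | nil => rfl
  | cons y l ih =>
    rw [List.map_cons, itCmt_cons_s9, itCmt_cons_s9, ih]
    congr 1
    simp [cmt]

lemma itCmt_mem_lcs {G : Type*} [Group G] (a : G) (l : List G) {n : ℕ}
    (ha : a ∈ (⊤ : Subgroup G).lowerCentralSeries n) :
    itCmt a l ∈ (⊤ : Subgroup G).lowerCentralSeries (n + l.length) := by
  induction l generalizing a n with
  | nil => exact ha
  | cons y l ih =>
    rw [itCmt_cons_s9]
    have hc : cmt a y ∈ (⊤ : Subgroup G).lowerCentralSeries (n + 1) := by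
      rw [lowerCentralSeries_succ]
      apply Subgroup.subset_closure
      exact ⟨a⁻¹, ((⊤ : Subgroup G).lowerCentralSeries n).inv_mem ha, y⁻¹, by simp [cmt, mul_assoc, commutatorElement_def]⟩
    have hlen : n + (y :: l).length = n + 1 + l.length := by
      simp; omega
    rw [hlen]
    exact ih _ hc

lemma mem_ucs_of_itCmt {Q : Type*} [Group Q] (j : ℕ) :
    ∀ (m : ℕ) (x : Q), (∀ l : List Q, l.length = j → itCmt x l ∈ upperCentralSeries Q m) →
      x ∈ upperCentralSeries Q (m + j) := by
  induction j with
  | zero => intro m x h; exact h [] rfl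
  | succ j ih =>
    intro m x h
    have hc : ∀ y : Q, cmt x y ∈ upperCentralSeries Q (m + j) := by
      intro y
      exact ih m (cmt x y) (fun l hl => h (y :: l) (by simp [hl]))
    rw [Nat.add_succ]; refine mem_upperCentralSeries_succ_iff.mpr ?_
    intro y
    have h1 : cmt x y⁻¹ ∈ upperCentralSeries Q (m + j) := hc y⁻¹
    have h2 : (cmt x y⁻¹)⁻¹ ∈ upperCentralSeries Q (m + j) :=
      (upperCentralSeries Q (m + j)).inv_mem h1
    have h3 : x * (cmt x y⁻¹)⁻¹ * x⁻¹ ∈ upperCentralSeries Q (m + j) :=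
      (show (Subgroup.upperCentralSeries Q (m + j)).Normal from inferInstance).conj_mem _ h2 x
    have : x * (cmt x y⁻¹)⁻¹ * x⁻¹ = x * y * x⁻¹ * y⁻¹ := by
      simp [cmt, mul_assoc]
    rwa [this] at h3

theorem stmt_9 {G : Type*} [Group G] (S : Set G) (hS : Subgroup.closure S = ⊤)
    (k : ℕ) (hk : 1 ≤ k) :
    (⊤ : Subgroup G).lowerCentralSeries k = Subgroup.normalClosure (⋃ g ∈ S, Xset g k) := by
  set N := Subgroup.normalClosure (⋃ g ∈ S, Xset g k) with hN
  haveI : N.Normal := Subgroup.normalClosure_normal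
  apply le_antisymm
  · -- lcs ≤ N : work in quotient
    set Q := G ⧸ N
    let π : G →* Q := QuotientGroup.mk' N
    have hsurj : Function.Surjective π := QuotientGroup.mk_surjective
    -- each generator is in the k-th upper center of Q
    have hgen : ∀ g ∈ S, π g ∈ upperCentralSeries Q k := by
      intro g hg
      have := mem_ucs_of_itCmt k 0 (π g) ?_
      · simpa using this
      · intro l hl
        obtain ⟨l', rfl⟩ := (List.map_surjective_iff.mpr hsurj) l
        rw [← map_itCmt]
        have hmem : itCmt g l' ∈ N := by
          apply Subgroup.subset_normalClosure
          exact Set.mem_biUnion hg ⟨l', by simpa using hl, rfl⟩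
        change π (itCmt g l') ∈ (⊥ : Subgroup Q); rw [Subgroup.mem_bot]
        rwa [← QuotientGroup.ker_mk' N, MonoidHom.mem_ker] at hmem
    have hucs : upperCentralSeries Q k = ⊤ := by
      rw [eq_top_iff]
      intro q _
      obtain ⟨x, rfl⟩ := hsurj q
      have hx : x ∈ Subgroup.closure S := hS ▸ Subgroup.mem_top x
      have : Subgroup.closure S ≤ (upperCentralSeries Q k).comap π :=
        Subgroup.closure_le _ |>.mpr (fun g hg => hgen g hg)
      exact this hx
    haveI : Group.IsNilpotent Q := ⟨⟨k, hucs⟩⟩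
    have hclass : Group.nilpotencyClass Q ≤ k :=
      upperCentralSeries_eq_top_iff_nilpotencyClass_le.mp hucs
    have hlcs : (⊤ : Subgroup Q).lowerCentralSeries k = ⊥ :=
      lowerCentralSeries_eq_bot_iff_nilpotencyClass_le.mpr hclass
    intro x hx
    have : π x ∈ (⊤ : Subgroup Q).lowerCentralSeries k :=
      lowerCentralSeries.map π k (Subgroup.mem_map_of_mem π hx)
    rw [hlcs, Subgroup.mem_bot] at this
    rwa [← QuotientGroup.ker_mk' N, MonoidHom.mem_ker]
  · -- N ≤ lcs
    apply Subgroup.normalClosure_le_normal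
    rintro b hb
    simp only [Set.mem_iUnion] at hb
    obtain ⟨g, hg, l, hl, rfl⟩ := hb
    have := itCmt_mem_lcs g l (n := 0) (by simp)
    simpa [hl] using this
end
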